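/- Crossing paths lemma: let u, v ∈ ℤ⁴↑ be boxes such that the pair (u, v) crosses horizontally. Then every up-right path from u⁻ to u⁺ intersects every up-right path from v⁻ to v⁺. (In particular, if (u,v) crosses horizontally or vertically, then no pair consisting of a u-path and a v-path can be disjoint.) -/

import Mathlib

/-- `SE x y` means `x ↘ y`: `x₁ ≤ y₁` and `x₂ ≥ y₂`. -/
def SE (x y : ℤ × ℤ) : Prop := x.1 ≤ y.1 ∧ y.2 ≤ x.2

/-- A point of `ℤ⁴↑`: a pair `(u⁻, u⁺)` with `u⁻ ≤ u⁺` coordinatewise. -/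
def IsBox (u : (ℤ × ℤ) × (ℤ × ℤ)) : Prop := u.1.1 ≤ u.2.1 ∧ u.1.2 ≤ u.2.2

/-- The pair `(u, v)` crosses horizontally: `u⁻ ↘ v⁻` and `v⁺ ↘ u⁺`. -/
def CrossH (u v : (ℤ × ℤ) × (ℤ × ℤ)) : Prop := SE u.1 v.1 ∧ SE v.2 u.2

/-- The pair `(u, v)` crosses vertically: `v⁻ ↘ u⁻` and `u⁺ ↘ v⁺`. -/
def CrossV (u v : (ℤ × ℤ) × (ℤ × ℤ)) : Prop := SE v.1 u.1 ∧ SE u.2 v.2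

/-- The rectangle in `ℤ²` associated to a box. -/
def boxSet (u : (ℤ × ℤ) × (ℤ × ℤ)) : Set (ℤ × ℤ) :=
  {p | u.1.1 ≤ p.1 ∧ p.1 ≤ u.2.1 ∧ u.1.2 ≤ p.2 ∧ p.2 ≤ u.2.2}

/-- One step of an up-right path: increase exactly one coordinate by 1. -/
def UpStep (a b : ℤ × ℤ) : Prop := b = (a.1 + 1, a.2) ∨ b = (a.1, a.2 + 1)

/-- `IsPath p x y` : `p` is an up-right lattice path from `x` to `y`. -/
def IsPath (p : List (ℤ × ℤ)) (x y : ℤ × ℤ) : Prop :=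
  p.head? = some x ∧ p.getLast? = some y ∧ p.Chain' UpStep

/-- The weight of a path in the environment `M`. -/
noncomputable def pathWeight (M : ℤ × ℤ → ℝ) (p : List (ℤ × ℤ)) : ℝ := (p.map M).sum

private lemma upStep_facts {a b : ℤ × ℤ} (h : UpStep a b) :
    b.1 + b.2 = a.1 + a.2 + 1 ∧ a.1 ≤ b.1 ∧ a.2 ≤ b.2 := by
  rcases h with h | h <;> subst h <;> simp <;> omega

private lemma chain_getD {p : List (ℤ × ℤ)} (hc : p.Chain' UpStep) :
    ∀ (i k : ℕ), i + k < p.length →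
      (p.getD (i+k) (0,0)).1 + (p.getD (i+k) (0,0)).2
        = (p.getD i (0,0)).1 + (p.getD i (0,0)).2 + k
      ∧ (p.getD i (0,0)).1 ≤ (p.getD (i+k) (0,0)).1
      ∧ (p.getD i (0,0)).2 ≤ (p.getD (i+k) (0,0)).2 := by
  intro i k
  induction k with
  | zero => intro _; simp
  | succ k ih =>
    intro h
    have h1 : i + k < p.length := by omega
    have h2 : i + k + 1 < p.length := by omega
    have h3 : i < p.length := by omega
    obtain ⟨hs, hm1, hm2⟩ := ih h1
    have hR : UpStep (p.get ⟨i+k, h1⟩) (p.get ⟨i+k+1, h2⟩) :=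
      List.isChain_iff_getElem.mp hc (i+k) (by omega)
    simp only [List.get_eq_getElem] at hR
    obtain ⟨e1, e2, e3⟩ := upStep_facts hR
    rw [← Nat.add_assoc]
    rw [List.getD_eq_getElem _ _ h2, List.getD_eq_getElem _ _ h3]
    rw [List.getD_eq_getElem _ _ h1, List.getD_eq_getElem _ _ h3] at hs hm1 hm2
    refine ⟨by push_cast; omega, by omega, by omega⟩

private lemma discrete_ivt (G : ℕ → ℤ) (N : ℕ) (h0 : G 0 ≤ 0) (hN : 0 ≤ G N)
    (hstep : ∀ k, k < N → G (k+1) ≤ G k + 1) : ∃ k, k ≤ N ∧ G k = 0 := by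
  induction N with
  | zero => exact ⟨0, le_refl 0, le_antisymm h0 hN⟩
  | succ N ih =>
    by_cases hc : 0 ≤ G N
    · obtain ⟨k, hk, hG⟩ := ih hc (fun k hk => hstep k (by omega))
      exact ⟨k, by omega, hG⟩
    · have := hstep N (by omega)
      exact ⟨N+1, le_refl _, by omega⟩

/-- If `(u, v)` crosses horizontally, then every `u`-path intersects every `v`-path. -/
theorem crossH_paths_intersect (u v : (ℤ × ℤ) × (ℤ × ℤ))
    (hu : IsBox u) (hv : IsBox v) (h : CrossH u v)
    (p q : List (ℤ × ℤ)) (hp : IsPath p u.1 u.2) (hq : IsPath q v.1 v.2) :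
    ∃ x, x ∈ p ∧ x ∈ q := by
  obtain ⟨⟨h11, h12⟩, ⟨h21, h22⟩⟩ := h
  obtain ⟨hu1, hu2⟩ := hu
  obtain ⟨hv1, hv2⟩ := hv
  obtain ⟨hph, hpl, hpc⟩ := hp
  obtain ⟨hqh, hql, hqc⟩ := hq
  have hpne : p ≠ [] := by rintro rfl; simp at hph
  have hqne : q ≠ [] := by rintro rfl; simp at hqh
  have hplen : 0 < p.length := List.length_pos_iff.mpr hpne
  have hqlen : 0 < q.length := List.length_pos_iff.mpr hqne
  -- head and last values
  have hp0 : p.getD 0 (0,0) = u.1 := by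
    rw [List.getD_eq_getElem _ _ hplen, ← List.head_eq_getElem hpne]
    exact Option.some_injective _ ((List.head?_eq_head hpne).symm.trans hph)
  have hq0 : q.getD 0 (0,0) = v.1 := by
    rw [List.getD_eq_getElem _ _ hqlen, ← List.head_eq_getElem hqne]
    exact Option.some_injective _ ((List.head?_eq_head hqne).symm.trans hqh)
  have hpL : p.getD (p.length - 1) (0,0) = u.2 := by
    rw [List.getD_eq_getElem _ _ (by omega), ← List.getLast_eq_getElem hpne]
    exact Option.some_injective _ ((List.getLast?_eq_getLast hpne).symm.trans hpl)
  have hqL : q.getD (q.length - 1) (0,0) = v.2 := by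
    rw [List.getD_eq_getElem _ _ (by omega), ← List.getLast_eq_getElem hqne]
    exact Option.some_injective _ ((List.getLast?_eq_getLast hqne).symm.trans hql)
  -- lengths
  have hlenp : u.2.1 + u.2.2 = u.1.1 + u.1.2 + (p.length : ℤ) - 1 := by
    have := (chain_getD hpc 0 (p.length - 1) (by omega)).1
    simp only [Nat.zero_add] at this
    rw [hp0, hpL] at this
    omega
  have hlenq : v.2.1 + v.2.2 = v.1.1 + v.1.2 + (q.length : ℤ) - 1 := by
    have := (chain_getD hqc 0 (q.length - 1) (by omega)).1
    simp only [Nat.zero_add] at this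
    rw [hq0, hqL] at this
    omega
  set A : ℤ := u.1.1 + u.1.2 with hA
  set B : ℤ := u.2.1 + u.2.2 with hB
  set C : ℤ := v.1.1 + v.1.2 with hC
  set D : ℤ := v.2.1 + v.2.2 with hD
  set t0 : ℤ := max A C with ht0
  set t1 : ℤ := min B D with ht1
  have htt : t0 ≤ t1 := by omega
  set N : ℕ := (t1 - t0).toNat with hN
  -- index bounds
  have hip : ∀ k : ℕ, k ≤ N → (t0 - A).toNat + k < p.length := by intro k hk; omega
  have hiq : ∀ k : ℕ, k ≤ N → (t0 - C).toNat + k < q.length := by intro k hk; omega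
  -- sums along paths
  have hsumP : ∀ k : ℕ, k ≤ N →
      (p.getD ((t0 - A).toNat + k) (0,0)).1 + (p.getD ((t0 - A).toNat + k) (0,0)).2
        = t0 + k := by
    intro k hk
    have := (chain_getD hpc 0 ((t0 - A).toNat + k) (by simpa using hip k hk)).1
    simp only [Nat.zero_add] at this
    rw [hp0] at this
    omega
  have hsumQ : ∀ k : ℕ, k ≤ N →
      (q.getD ((t0 - C).toNat + k) (0,0)).1 + (q.getD ((t0 - C).toNat + k) (0,0)).2
        = t0 + k := by
    intro k hk
    have := (chain_getD hqc 0 ((t0 - C).toNat + k) (by simpa using hiq k hk)).1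
    simp only [Nat.zero_add] at this
    rw [hq0] at this
    omega
  -- monotonicity from the start
  have hmP0 : ∀ k : ℕ, k ≤ N →
      u.1.1 ≤ (p.getD ((t0 - A).toNat + k) (0,0)).1
      ∧ u.1.2 ≤ (p.getD ((t0 - A).toNat + k) (0,0)).2 := by
    intro k hk
    have := (chain_getD hpc 0 ((t0 - A).toNat + k) (by simpa using hip k hk)).2
    simp only [Nat.zero_add] at this
    rw [hp0] at this
    exact this
  have hmQ0 : ∀ k : ℕ, k ≤ N →
      v.1.1 ≤ (q.getD ((t0 - C).toNat + k) (0,0)).1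
      ∧ v.1.2 ≤ (q.getD ((t0 - C).toNat + k) (0,0)).2 := by
    intro k hk
    have := (chain_getD hqc 0 ((t0 - C).toNat + k) (by simpa using hiq k hk)).2
    simp only [Nat.zero_add] at this
    rw [hq0] at this
    exact this
  -- monotonicity up to the end
  have hmPL : ∀ k : ℕ, k ≤ N →
      (p.getD ((t0 - A).toNat + k) (0,0)).1 ≤ u.2.1
      ∧ (p.getD ((t0 - A).toNat + k) (0,0)).2 ≤ u.2.2 := by
    intro k hk
    have hlt := hip k hk
    have he : (t0 - A).toNat + k + (p.length - 1 - ((t0 - A).toNat + k)) = p.length - 1 := by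
      omega
    have := (chain_getD hpc ((t0 - A).toNat + k)
      (p.length - 1 - ((t0 - A).toNat + k)) (by omega)).2
    rw [he, hpL] at this
    exact this
  have hmQL : ∀ k : ℕ, k ≤ N →
      (q.getD ((t0 - C).toNat + k) (0,0)).1 ≤ v.2.1
      ∧ (q.getD ((t0 - C).toNat + k) (0,0)).2 ≤ v.2.2 := by
    intro k hk
    have hlt := hiq k hk
    have he : (t0 - C).toNat + k + (q.length - 1 - ((t0 - C).toNat + k)) = q.length - 1 := by
      omega
    have := (chain_getD hqc ((t0 - C).toNat + k)
      (q.length - 1 - ((t0 - C).toNat + k)) (by omega)).2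
    rw [he, hqL] at this
    exact this
  -- one-step monotonicity
  have hstepP : ∀ k : ℕ, k < N →
      (p.getD ((t0 - A).toNat + k) (0,0)).2 ≤ (p.getD ((t0 - A).toNat + (k+1)) (0,0)).2 := by
    intro k hk
    have := (chain_getD hpc ((t0 - A).toNat + k) 1 (by have := hip (k+1) (by omega); omega)).2.2
    have he : (t0 - A).toNat + k + 1 = (t0 - A).toNat + (k+1) := by omega
    rw [he] at this
    exact this
  have hstepQ : ∀ k : ℕ, k < N →
      (q.getD ((t0 - C).toNat + k) (0,0)).1 ≤ (q.getD ((t0 - C).toNat + (k+1)) (0,0)).1 := by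
    intro k hk
    have := (chain_getD hqc ((t0 - C).toNat + k) 1 (by have := hiq (k+1) (by omega); omega)).2.1
    have he : (t0 - C).toNat + k + 1 = (t0 - C).toNat + (k+1) := by omega
    rw [he] at this
    exact this
  -- apply the discrete IVT to the horizontal gap
  set G : ℕ → ℤ := fun k =>
    (p.getD ((t0 - A).toNat + k) (0,0)).1 - (q.getD ((t0 - C).toNat + k) (0,0)).1 with hG
  have h0 : G 0 ≤ 0 := by
    have e1 := hsumP 0 (by omega)
    have e2 := hsumQ 0 (by omega)
    have e3 := hmP0 0 (by omega)
    have e4 := hmQ0 0 (by omega)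
    simp only [hG]
    push_cast at e1 e2 ⊢
    omega
  have hNN : 0 ≤ G N := by
    have e1 := hsumP N le_rfl
    have e2 := hsumQ N le_rfl
    have e3 := hmPL N le_rfl
    have e4 := hmQL N le_rfl
    simp only [hG]
    push_cast at e1 e2 ⊢
    omega
  have hstep : ∀ k, k < N → G (k+1) ≤ G k + 1 := by
    intro k hk
    have e1 := hsumP k (by omega)
    have e2 := hsumP (k+1) (by omega)
    have e3 := hstepP k hk
    have e4 := hstepQ k hk
    simp only [hG]
    push_cast at e1 e2 ⊢
    omega
  obtain ⟨k, hkN, hGk⟩ := discrete_ivt G N h0 hNN hstep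
  refine ⟨p.getD ((t0 - A).toNat + k) (0,0), ?_, ?_⟩
  · rw [List.getD_eq_getElem _ _ (hip k hkN)]
    exact List.getElem_mem _
  · have heq : p.getD ((t0 - A).toNat + k) (0,0) = q.getD ((t0 - C).toNat + k) (0,0) := by
      have e1 := hsumP k hkN
      have e2 := hsumQ k hkN
      simp only [hG] at hGk
      have : (p.getD ((t0 - A).toNat + k) (0,0)).1 = (q.getD ((t0 - C).toNat + k) (0,0)).1 ∧
          (p.getD ((t0 - A).toNat + k) (0,0)).2 = (q.getD ((t0 - C).toNat + k) (0,0)).2 := by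
        omega
      exact Prod.ext this.1 this.2
    rw [heq, List.getD_eq_getElem _ _ (hiq k hkN)]
    exact List.getElem_mem _
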